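/- Let (B_i, ι_i) be a directed system of nonarchimedean Banach rings with submetric transition maps ι_i, let B be the direct limit endowed with the infimum seminorm, and let B → C be an isometric homomorphism with dense image into a Banach ring C. Then every finitely generated projective right C-module arises, up to isomorphism, by base change from a finitely generated projective right B_i-module for some index i. -/

import Mathlib

open Matrix Filter

attribute [local instance] Matrix.linftyOpNormedRing


attribute [local instance] Matrix.linftyOpNormedRing

section MatNorm
variable {R S : Type*} [NormedRing R] [NormedRing S] {n : ℕ}

lemma mat_complete [CompleteSpace R] : CompleteSpace (Matrix (Fin n) (Fin n) R) := by
  haveI : CompleteSpace (Fin n → R) :=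
    (inferInstance : CompleteSpace (∀ _ : Fin n, R))
  exact (inferInstance : CompleteSpace (Fin n → Fin n → R))

lemma mat_entry_le (A : Matrix (Fin n) (Fin n) R) (a b : Fin n) : ‖A a b‖ ≤ ‖A‖ := by
  have h : ‖A a b‖₊ ≤ ‖A‖₊ := by
    rw [Matrix.linfty_opNNNorm_def]
    exact le_trans (Finset.single_le_sum (f := fun j => ‖A a j‖₊)
      (fun _ _ => zero_le) (Finset.mem_univ b))
      (Finset.le_sup (f := fun i => ∑ j, ‖A i j‖₊) (Finset.mem_univ a))
  exact_mod_cast h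

lemma mat_norm_le_of_entries (A : Matrix (Fin n) (Fin n) R) {c : ℝ} (hc : 0 ≤ c)
    (h : ∀ a b, ‖A a b‖ ≤ c) : ‖A‖ ≤ n * c := by
  set d : NNReal := ⟨n * c, by positivity⟩ with hd_def
  have hd : ‖A‖₊ ≤ d := by
    rw [Matrix.linfty_opNNNorm_def]
    refine Finset.sup_le fun a _ => ?_
    rw [← NNReal.coe_le_coe]
    push_cast [hd_def]
    calc (∑ j, ‖A a j‖) ≤ ∑ _j : Fin n, c := Finset.sum_le_sum fun j _ => h a j
      _ = n * c := by simp [Finset.sum_const, Finset.card_univ, nsmul_eq_mul]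
  calc ‖A‖ = ((‖A‖₊ : NNReal) : ℝ) := (coe_nnnorm _).symm
    _ ≤ ((d : NNReal) : ℝ) := NNReal.coe_le_coe.2 hd
    _ = n * c := rfl

lemma mat_map_norm_le (f : R →+* S) (hf : ∀ x, ‖f x‖ ≤ ‖x‖) (A : Matrix (Fin n) (Fin n) R) :
    ‖A.map f‖ ≤ ‖A‖ := by
  have h : ‖A.map f‖₊ ≤ ‖A‖₊ := by
    rw [Matrix.linfty_opNNNorm_def, Matrix.linfty_opNNNorm_def]
    refine Finset.sup_mono_fun fun a _ => Finset.sum_le_sum fun j _ => ?_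
    have := hf (A a j)
    rw [← coe_nnnorm, ← coe_nnnorm] at this
    exact_mod_cast this
  exact_mod_cast h

end MatNorm

section Conj

lemma exists_unit_conj {A : Type*} [NormedRing A] [CompleteSpace A] (O Q : A)
    (hO : O*O = O) (hQ : Q*Q = Q) (h : ‖(O+O-1)*(Q-O)‖ < 1) :
    ∃ U : Aˣ, (U : A) * Q = O * U := by
  have h' : ‖-((O+O-1)*(Q-O))‖ < 1 := by rwa [norm_neg]
  refine ⟨Units.oneSub (-((O+O-1)*(Q-O))) h', ?_⟩
  have hval : ((Units.oneSub (-((O+O-1)*(Q-O))) h' : Aˣ) : A) = 1 + (O+O-1)*(Q-O) := by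
    show (1 : A) - -((O+O-1)*(Q-O)) = _
    rw [sub_neg_eq_add]
  rw [hval]
  have h1 : (1 + (O+O-1)*(Q-O)) * Q
      = Q + O*(Q*Q) + O*(Q*Q) - (O*O)*Q - (O*O)*Q - Q*Q + O*Q := by noncomm_ring
  have h2 : O * (1 + (O+O-1)*(Q-O))
      = O + (O*O)*Q + (O*O)*Q - (O*O)*O - (O*O)*O - O*Q + O*O := by noncomm_ring
  rw [h1, h2]
  simp only [hO, hQ]
  abel

lemma range_equiv_of_conj {R : Type*} [Ring R] {n : ℕ} (O Q : Matrix (Fin n) (Fin n) R)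
    (U : (Matrix (Fin n) (Fin n) R)ˣ) (hU : U.val * Q = O * U.val) :
    Nonempty ((LinearMap.range O.vecMulLinear) ≃ₗ[R] LinearMap.range Q.vecMulLinear) := by
  set Uv : Matrix (Fin n) (Fin n) R := U.val with hUv
  set Uw : Matrix (Fin n) (Fin n) R := (U⁻¹).val with hUw
  have hUvw : Uw * Uv = 1 := U.inv_mul
  have hUwv : Uv * Uw = 1 := U.mul_inv
  set e : (Fin n → R) ≃ₗ[R] (Fin n → R) := LinearEquiv.ofLinear
      (Matrix.vecMulLinear Uv) (Matrix.vecMulLinear Uw)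
      (LinearMap.ext fun x => by
        simp [Matrix.vecMul_vecMul, hUvw, Matrix.vecMul_one])
      (LinearMap.ext fun x => by
        simp [Matrix.vecMul_vecMul, hUwv, Matrix.vecMul_one]) with hedef
  have hmap : Submodule.map (e : (Fin n → R) →ₗ[R] (Fin n → R)) (LinearMap.range O.vecMulLinear)
      = LinearMap.range Q.vecMulLinear := by
    apply le_antisymm
    · rintro y hy
      rw [Submodule.mem_map] at hy
      obtain ⟨z, ⟨x, rfl⟩, rfl⟩ := hy
      refine ⟨x ᵥ* Uv, ?_⟩
      show (x ᵥ* Uv) ᵥ* Q = Matrix.vecMulLinear Uv (Matrix.vecMulLinear O x)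
      show (x ᵥ* Uv) ᵥ* Q = (x ᵥ* O) ᵥ* Uv
      rw [Matrix.vecMul_vecMul, Matrix.vecMul_vecMul, hU]
    · rintro y ⟨x, rfl⟩
      rw [Submodule.mem_map]
      refine ⟨(x ᵥ* Uw) ᵥ* O, ⟨x ᵥ* Uw, rfl⟩, ?_⟩
      show ((x ᵥ* Uw) ᵥ* O) ᵥ* Uv = Matrix.vecMulLinear Q x
      show ((x ᵥ* Uw) ᵥ* O) ᵥ* Uv = x ᵥ* Q
      rw [Matrix.vecMul_vecMul, Matrix.vecMul_vecMul, ← hU, ← Matrix.mul_assoc, hUvw,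
        Matrix.one_mul]
  exact ⟨(LinearEquiv.submoduleMap e _).trans (LinearEquiv.ofEq _ _ hmap)⟩

end Conj

section Newton
variable {A : Type*} [NormedRing A] [CompleteSpace A]

private lemma newton_idem (p : A) {ε : ℝ} (hε : 0 < ε) (hε1 : ε ≤ 1)
    (h8 : ‖p*p - p‖ ≤ 8⁻¹)
    (hsm : ‖p*p - p‖ * (2 * (2*‖p‖ + 3)) < ε) :
    ∃ q : A, q*q = q ∧ ‖q - p‖ < ε := by
  set L : ℝ := 2*‖p‖+3 with hLdef
  have hL : 0 < L := by positivity
  set e₀ : ℝ := ‖p*p - p‖ with he₀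
  have he₀0 : 0 ≤ e₀ := he₀ ▸ norm_nonneg _
  clear_value L e₀
  have h2eL : 2*e₀*L < ε := by rw [hLdef]; nlinarith [hsm]
  have h2eL1 : 2*e₀*L ≤ 1 := le_of_lt (lt_of_lt_of_le h2eL hε1)
  have he₀8 : e₀ ≤ 8⁻¹ := h8
  set f : A → A := fun x => x*x + x*x + x*x - (x*x*x + x*x*x) with hf
  set Q : ℕ → A := fun k => f^[k] p with hQdef
  have hQ0 : Q 0 = p := rfl
  have hQs : ∀ k, Q (k+1) = f (Q k) := fun k => Function.iterate_succ_apply' f k p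
  clear_value Q
  -- step estimates
  have hagen : ∀ x : A, ‖x*x - x‖ ≤ 8⁻¹ → ‖f x * f x - f x‖ ≤ ‖x*x - x‖ * 2⁻¹ := by
    intro x hx
    set e : A := x*x - x with he
    have h1 : f x * f x - f x
        = (e*e*e + e*e*e + e*e*e + e*e*e) - (e*e + e*e + e*e) := by
      simp only [hf, he]; noncomm_ring
    have n2 : ‖e*e‖ ≤ ‖e‖*‖e‖ := norm_mul_le _ _
    have n3 : ‖e*e*e‖ ≤ ‖e‖*‖e‖*‖e‖ :=
      le_trans (norm_mul_le _ _) (mul_le_mul_of_nonneg_right n2 (norm_nonneg _))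
    have s3 : ‖e*e + e*e + e*e‖ ≤ 3*(‖e‖*‖e‖) := by
      calc ‖e*e + e*e + e*e‖ ≤ ‖e*e + e*e‖ + ‖e*e‖ := norm_add_le _ _
        _ ≤ (‖e*e‖ + ‖e*e‖) + ‖e*e‖ := by gcongr; exact norm_add_le _ _
        _ ≤ 3*(‖e‖*‖e‖) := by nlinarith [n2]
    have s4 : ‖e*e*e + e*e*e + e*e*e + e*e*e‖ ≤ 4*(‖e‖*‖e‖*‖e‖) := by
      calc ‖e*e*e + e*e*e + e*e*e + e*e*e‖
          ≤ ‖e*e*e + e*e*e + e*e*e‖ + ‖e*e*e‖ := norm_add_le _ _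
        _ ≤ (‖e*e*e + e*e*e‖ + ‖e*e*e‖) + ‖e*e*e‖ := by gcongr; exact norm_add_le _ _
        _ ≤ ((‖e*e*e‖ + ‖e*e*e‖) + ‖e*e*e‖) + ‖e*e*e‖ := by gcongr; exact norm_add_le _ _
        _ ≤ 4*(‖e‖*‖e‖*‖e‖) := by nlinarith [n3]
    have htot : ‖f x * f x - f x‖ ≤ 4*(‖e‖*‖e‖*‖e‖) + 3*(‖e‖*‖e‖) := by
      rw [h1]
      exact le_trans (norm_sub_le _ _) (by linarith)
    have hen : (0:ℝ) ≤ ‖e‖ := norm_nonneg _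
    nlinarith [htot, hx, hen]
  have hbgen : ∀ x : A, ‖x‖ ≤ ‖p‖+1 → ‖f x - x‖ ≤ ‖x*x - x‖ * L := by
    intro x hx
    set e : A := x*x - x with he
    have h1 : f x - x = e - (e*x + e*x) := by simp only [hf, he]; noncomm_ring
    have n1 : ‖e*x‖ ≤ ‖e‖*‖x‖ := norm_mul_le _ _
    have : ‖f x - x‖ ≤ ‖e‖ + (‖e*x‖ + ‖e*x‖) := by
      rw [h1]; exact le_trans (norm_sub_le _ _) (by gcongr; exact norm_add_le _ _)
    have hen : (0:ℝ) ≤ ‖e‖ := norm_nonneg _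
    rw [hLdef]
    nlinarith [this, n1, hx, hen, norm_nonneg x]
  -- main invariant
  have key : ∀ k, ‖Q k * Q k - Q k‖ ≤ e₀ * 2⁻¹^k ∧ ‖Q k - p‖ ≤ 2*e₀*L*(1 - 2⁻¹^k) := by
    intro k
    induction k with
    | zero => exact ⟨by simp [hQ0, he₀], by simp [hQ0]⟩
    | succ k ih =>
      obtain ⟨hE, hD⟩ := ih
      have hpow0 : (0:ℝ) ≤ 2⁻¹^k := by positivity
      have hpow1 : (2⁻¹:ℝ)^k ≤ 1 := pow_le_one₀ (by norm_num) (by norm_num)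
      have hEk : ‖Q k * Q k - Q k‖ ≤ 8⁻¹ := le_trans hE (by nlinarith)
      have hQk : ‖Q k‖ ≤ ‖p‖ + 1 := by
        have h4 := norm_sub_norm_le (Q k) p
        have h6 : (0:ℝ) ≤ 2*e₀*L*(2⁻¹^k) := by positivity
        have h7 : 2*e₀*L*(1 - 2⁻¹^k) = 2*e₀*L - 2*e₀*L*(2⁻¹^k) := by ring
        linarith
      have ha := hagen (Q k) hEk
      have hb := hbgen (Q k) hQk
      constructor
      · rw [hQs k]
        calc ‖f (Q k) * f (Q k) - f (Q k)‖ ≤ ‖Q k * Q k - Q k‖ * 2⁻¹ := ha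
          _ ≤ (e₀ * 2⁻¹^k) * 2⁻¹ := by nlinarith
          _ = e₀ * 2⁻¹^(k+1) := by rw [pow_succ]; ring
      · rw [hQs k]
        have tri : ‖f (Q k) - p‖ ≤ ‖f (Q k) - Q k‖ + ‖Q k - p‖ := by
          have := norm_add_le (f (Q k) - Q k) (Q k - p)
          rwa [sub_add_sub_cancel] at this
        have t1 : ‖f (Q k) - Q k‖ ≤ (e₀ * 2⁻¹^k) * L :=
          le_trans hb (mul_le_mul_of_nonneg_right hE hL.le)
        have heq : (e₀ * 2⁻¹^k) * L + 2*e₀*L*(1 - 2⁻¹^k) = 2*e₀*L*(1 - 2⁻¹^(k+1)) := by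
          rw [pow_succ]; ring
        linarith
  have hQbound : ∀ k, ‖Q k‖ ≤ ‖p‖ + 1 := by
    intro k
    have h1 := (key k).2
    have hpow0 : (0:ℝ) ≤ 2⁻¹^k := by positivity
    have hpow1 : (2⁻¹:ℝ)^k ≤ 1 := pow_le_one₀ (by norm_num) (by norm_num)
    have h4 := norm_sub_norm_le (Q k) p
    have h6 : (0:ℝ) ≤ 2*e₀*L*(2⁻¹^k) := by positivity
    have h7 : 2*e₀*L*(1 - 2⁻¹^k) = 2*e₀*L - 2*e₀*L*(2⁻¹^k) := by ring
    linarith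
  have hcau : CauchySeq Q := by
    apply cauchySeq_of_le_geometric 2⁻¹ (e₀*L) (by norm_num)
    intro k
    rw [dist_eq_norm, norm_sub_rev, hQs k]
    calc ‖f (Q k) - Q k‖ ≤ ‖Q k * Q k - Q k‖ * L := hbgen _ (hQbound k)
      _ ≤ (e₀ * 2⁻¹^k) * L := mul_le_mul_of_nonneg_right (key k).1 hL.le
      _ = e₀ * L * 2⁻¹^k := by ring
  obtain ⟨q, hq⟩ := cauchySeq_tendsto_of_complete hcau
  refine ⟨q, ?_, ?_⟩
  · have t1 : Tendsto (fun k => Q k * Q k - Q k) atTop (nhds (q*q - q)) := (hq.mul hq).sub hq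
    have t2 : Tendsto (fun k => Q k * Q k - Q k) atTop (nhds 0) := by
      apply squeeze_zero_norm (fun k => (key k).1)
      have := (tendsto_pow_atTop_nhds_zero_of_lt_one (by norm_num : (0:ℝ) ≤ 2⁻¹)
        (by norm_num)).const_mul e₀
      simpa [mul_comm] using this
    have := tendsto_nhds_unique t1 t2
    rwa [sub_eq_zero] at this
  · have t3 : Tendsto (fun k => ‖Q k - p‖) atTop (nhds ‖q - p‖) :=
      (hq.sub tendsto_const_nhds).norm
    have hle : ‖q - p‖ ≤ 2*e₀*L := by
      refine le_of_tendsto' t3 fun k => ?_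
      have h6 : (0:ℝ) ≤ 2*e₀*L*(2⁻¹^k) := by positivity
      have h7 : 2*e₀*L*(1 - 2⁻¹^k) = 2*e₀*L - 2*e₀*L*(2⁻¹^k) := by ring
      have := (key k).2
      linarith
    linarith

end Newton

set_option maxHeartbeats 1000000 in
/-- after Kedlaya–Liu [KL16, Lemma 5.6.8].
Let `(B_i, ι_i)` be a directed system of nonarchimedean Banach rings with
submetric transition maps, `B` its direct limit with the infimum seminorm, and
`B → C` an isometric homomorphism with dense image into a Banach ring `C`
(encoded here by the compatible maps `u i : B i → C`, the isometry condition
`hiso` for the infimum seminorm, and the density `hdense`).  Then every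
finitely generated projective right `C`-module arises, up to isomorphism, by
base change from a finitely generated projective `B_i`-module for some `i`
(the `B_i`-module being the image of an idempotent matrix `Q`, whose base
change is the image of `Q.map (u i)`). -/
theorem stmt6 {ι : Type*} [Preorder ι] [IsDirected ι (· ≤ ·)] [Nonempty ι]
    (B : ι → Type*) [∀ i, NormedRing (B i)] [∀ i, CompleteSpace (B i)]
    [∀ i, IsUltrametricDist (B i)]
    {C : Type*} [NormedRing C] [CompleteSpace C] [IsUltrametricDist C]
    (t : ∀ {i j : ι}, i ≤ j → (B i →+* B j))
    (ht : ∀ {i j : ι} (h : i ≤ j) (x : B i), ‖t h x‖ ≤ ‖x‖)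
    (tcomp : ∀ {i j k : ι} (hij : i ≤ j) (hjk : j ≤ k) (x : B i),
      t hjk (t hij x) = t (hij.trans hjk) x)
    (u : ∀ i, B i →+* C)
    (hu : ∀ {i j : ι} (h : i ≤ j) (x : B i), u j (t h x) = u i x)
    (hiso : ∀ (i : ι) (x : B i), ‖u i x‖ = ⨅ j : {j : ι // i ≤ j}, ‖t j.2 x‖)
    (hdense : DenseRange fun q : Σ i, B i => u q.1 q.2)
    {M : Type*} [AddCommGroup M] [Module C M]
    [Module.Finite C M] [Module.Projective C M] :
    ∃ (n : ℕ) (i : ι) (Q : Matrix (Fin n) (Fin n) (B i)), Q * Q = Q ∧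
      Nonempty (M ≃ₗ[C] LinearMap.range (Matrix.vecMulLinear (Q.map (u i)))) := by
  classical
  -- Step 1: present `M` as the range of an idempotent matrix `O` over `C`.
  obtain ⟨n, π, σ, hπsurj, hσinj, hπσ⟩ := Module.Finite.exists_comp_eq_id_of_projective C M
  have hpt : ∀ m : M, π (σ m) = m := fun m => by
    have := LinearMap.ext_iff.1 hπσ m
    simpa using this
  set eM : (Fin n → C) →ₗ[C] (Fin n → C) := σ ∘ₗ π with heM
  have heMe : eM ∘ₗ eM = eM := by
    apply LinearMap.ext; intro x
    simp [heM, hpt]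
  set O : Matrix (Fin n) (Fin n) C := LinearMap.toMatrixRight' eM with hOdef
  have hOvml : Matrix.vecMulLinear O = eM :=
    LinearEquiv.symm_apply_apply LinearMap.toMatrixRight' eM
  have htl : ∀ Mx : Matrix (Fin n) (Fin n) C,
      (Matrix.toLinearMapRight' Mx : (Fin n → C) →ₗ[C] (Fin n → C)) = Matrix.vecMulLinear Mx :=
    fun _ => rfl
  have hO : O * O = O := by
    apply Matrix.toLinearMapRight'.injective
    rw [Matrix.toLinearMapRight'_mul, htl, hOvml, heMe]
  have h1 : LinearMap.range eM = LinearMap.range σ := by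
    apply le_antisymm
    · rw [heM]; exact LinearMap.range_comp_le_range π σ
    · rintro x ⟨m, rfl⟩
      exact ⟨σ m, by simp [heM, hpt]⟩
  have h2 : LinearMap.range σ = LinearMap.range (Matrix.vecMulLinear O) := by rw [hOvml, h1]
  have hMiso : M ≃ₗ[C] LinearMap.range (Matrix.vecMulLinear O) :=
    (LinearEquiv.ofInjective σ hσinj).trans (LinearEquiv.ofEq _ _ h2)
  -- Step 2: numerics
  haveI : CompleteSpace (Matrix (Fin n) (Fin n) C) := mat_complete
  set c : ℝ := ‖O + O - (1 : Matrix (Fin n) (Fin n) C)‖ with hc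
  have hc0 : 0 ≤ c := hc ▸ norm_nonneg _
  clear_value c
  set εf : ℝ := (c+1)⁻¹ with hεf
  have hεf0 : 0 < εf := by rw [hεf]; positivity
  have hεf1 : εf ≤ 1 := by
    rw [hεf]
    rw [inv_le_one_iff₀]
    right; linarith
  set K : ℝ := n*(‖O‖+2) + 1 with hK
  have hK0 : 0 < K := by rw [hK]; positivity
  have hKO : (n:ℝ)*(‖O‖+2) ≤ K := by rw [hK]; linarith
  clear_value K
  set εN : ℝ := εf/2 with hεN
  have hεN0 : 0 < εN := by rw [hεN]; positivity
  have hεN1 : εN ≤ 1 := by rw [hεN]; linarith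
  clear_value εN
  set δ : ℝ := min 8⁻¹ (εN / (2*(2*K+3)) / 2) with hδ
  have hδ0 : 0 < δ := by
    rw [hδ]
    apply lt_min (by norm_num)
    positivity
  have hδ8 : δ ≤ 8⁻¹ := min_le_left _ _
  have hδN : δ ≤ εN / (2*(2*K+3)) / 2 := min_le_right _ _
  clear_value δ
  set δe : ℝ := δ/(n+1) with hδe
  have hδe0 : 0 < δe := by rw [hδe]; positivity
  have hδeδ : (n:ℝ) * δe < δ := by
    rw [hδe]
    have hn1 : (0:ℝ) < n+1 := by positivity
    calc (n:ℝ)*(δ/(n+1)) = δ * ((n:ℝ)/(n+1)) := by ring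
      _ < δ * 1 := by
        apply mul_lt_mul_of_pos_left _ hδ0
        rw [div_lt_one hn1]; linarith
      _ = δ := mul_one δ
  clear_value δe
  set ε₁ : ℝ := min (εf/2) (min 1 (δe / (2*(‖O‖+1)) / 2)) with hε₁
  have hε₁0 : 0 < ε₁ := by
    rw [hε₁]
    exact lt_min (by positivity) (lt_min one_pos (by positivity))
  have hε₁f : ε₁ ≤ εf/2 := min_le_left _ _
  have hε₁1 : ε₁ ≤ 1 := le_trans (min_le_right _ _) (min_le_left _ _)
  have hε₁δ : ε₁ ≤ δe / (2*(‖O‖+1)) / 2 := le_trans (min_le_right _ _) (min_le_right _ _)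
  clear_value ε₁
  -- Step 3: density at the matrix level
  have matdense : ∀ ε : ℝ, 0 < ε → ∃ (i : ι) (p : Matrix (Fin n) (Fin n) (B i)),
      ‖p.map (u i) - O‖ < ε := by
    intro ε hε
    have hdr := Metric.denseRange_iff.1 hdense
    choose y hy using fun ab : Fin n × Fin n => hdr (O ab.1 ab.2) (ε/(n+1)) (by positivity)
    obtain ⟨i, hi⟩ := Finset.exists_le
      ((Finset.univ : Finset (Fin n × Fin n)).image fun ab => (y ab).1)
    have hle : ∀ ab : Fin n × Fin n, (y ab).1 ≤ i :=
      fun ab => hi _ (Finset.mem_image_of_mem _ (Finset.mem_univ ab))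
    refine ⟨i, Matrix.of fun a b => t (hle (a,b)) (y (a,b)).2, ?_⟩
    have hent : ∀ a b,
        ‖((Matrix.of fun a b => t (hle (a,b)) (y (a,b)).2).map (u i) - O) a b‖ ≤ ε/(n+1) := by
      intro a b
      have heq : u i (t (hle (a,b)) (y (a,b)).2) = u (y (a,b)).1 (y (a,b)).2 := hu _ _
      simp only [Matrix.sub_apply, Matrix.map_apply, Matrix.of_apply, heq]
      rw [← dist_eq_norm, dist_comm]
      exact le_of_lt (hy (a,b))
    have hn1 : (0:ℝ) < n+1 := by positivity
    calc ‖(Matrix.of fun a b => t (hle (a,b)) (y (a,b)).2).map (u i) - O‖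
        ≤ n * (ε/(n+1)) := mat_norm_le_of_entries _ (by positivity) hent
      _ = ε * ((n:ℝ)/(n+1)) := by ring
      _ < ε * 1 := by
        apply mul_lt_mul_of_pos_left _ hε
        rw [div_lt_one hn1]; linarith
      _ = ε := mul_one ε
  -- Step 4: basic norm facts for the `u i`
  have hult : ∀ (i : ι) (x : B i), ‖u i x‖ ≤ ‖x‖ := by
    intro i x
    rw [hiso]
    refine le_trans (ciInf_le ⟨0, ?_⟩ (⟨i, le_refl i⟩ : {j : ι // i ≤ j})) (ht _ x)
    rintro _ ⟨j, rfl⟩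
    exact norm_nonneg _
  have push : ∀ (i : ι) (x : B i) (d : ℝ), ‖u i x‖ < d → ∃ j, ∃ h : i ≤ j, ‖t h x‖ < d := by
    intro i x d hx
    haveI : Nonempty {j : ι // i ≤ j} := ⟨⟨i, le_refl i⟩⟩
    rw [hiso] at hx
    obtain ⟨⟨j, hj⟩, hlt⟩ := exists_lt_of_ciInf_lt hx
    exact ⟨j, hj, hlt⟩
  -- Step 5: pick the approximation p over B i
  obtain ⟨i, p, hp⟩ := matdense ε₁ hε₁0
  set P : Matrix (Fin n) (Fin n) C := p.map (u i) with hPdef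
  have hPnorm : ‖P‖ ≤ ‖O‖ + 1 := by
    have h4 := norm_sub_norm_le P O
    linarith [hp, hε₁1]
  have hPP : ‖P*P - P‖ ≤ 2*ε₁*(‖O‖+1) := by
    have hid : P*P - P = (P-O)*P + O*(P-O) - (P-O) + ((O*O) - O) := by noncomm_ring
    rw [hO, sub_self, add_zero] at hid
    rw [hid]
    have n1 : ‖(P-O)*P‖ ≤ ‖P-O‖*‖P‖ := norm_mul_le _ _
    have n2 : ‖O*(P-O)‖ ≤ ‖O‖*‖P-O‖ := norm_mul_le _ _
    have tri : ‖(P-O)*P + O*(P-O) - (P-O)‖ ≤ ‖(P-O)*P‖ + ‖O*(P-O)‖ + ‖P-O‖ := by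
      calc ‖(P-O)*P + O*(P-O) - (P-O)‖ ≤ ‖(P-O)*P + O*(P-O)‖ + ‖P-O‖ := norm_sub_le _ _
        _ ≤ (‖(P-O)*P‖ + ‖O*(P-O)‖) + ‖P-O‖ := by gcongr; exact norm_add_le _ _
    have hPO : ‖P - O‖ ≤ ε₁ := le_of_lt hp
    have m1 : ‖P-O‖*‖P‖ ≤ ε₁*(‖O‖+1) :=
      mul_le_mul hPO hPnorm (norm_nonneg _) hε₁0.le
    have m2 : ‖O‖*‖P-O‖ ≤ ‖O‖*ε₁ := mul_le_mul_of_nonneg_left hPO (norm_nonneg _)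
    nlinarith [norm_nonneg O]
  -- entrywise bounds
  have hPe : ∀ a b : Fin n, ‖u i (p a b)‖ < ‖O‖ + 2 := by
    intro a b
    have h1 : ‖P a b‖ ≤ ‖P‖ := mat_entry_le P a b
    have h2 : P a b = u i (p a b) := rfl
    rw [h2] at h1
    linarith
  have hmapsub : (p*p - p).map (u i) = P*P - P := by
    ext a b
    simp [hPdef, Matrix.map_apply, Matrix.sub_apply, Matrix.mul_apply, map_sub, map_sum, _root_.map_mul]
  have h2e : 2*ε₁*(‖O‖+1) < δe := by
    have hOp : (0:ℝ) < 2*(‖O‖+1) := by positivity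
    have hm := mul_le_mul_of_nonneg_right hε₁δ hOp.le
    have heq : δe / (2*(‖O‖+1)) / 2 * (2*(‖O‖+1)) = δe/2 := by field_simp
    rw [heq] at hm
    nlinarith [hδe0]
  have hppe : ∀ a b : Fin n, ‖u i ((p*p - p) a b)‖ < δe := by
    intro a b
    have h1 : ‖u i ((p*p - p) a b)‖ ≤ ‖P*P - P‖ := by
      calc ‖u i ((p*p - p) a b)‖ = ‖((p*p - p).map (u i)) a b‖ := rfl
        _ = ‖(P*P - P) a b‖ := by rw [hmapsub]
        _ ≤ ‖P*P - P‖ := mat_entry_le _ a b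
    linarith [hPP, h2e]
  -- Step 6: pass to a common larger index jj
  choose j1 hj1 hb1 using fun ab : Fin n × Fin n => push i (p ab.1 ab.2) _ (hPe ab.1 ab.2)
  choose j2 hj2 hb2 using fun ab : Fin n × Fin n => push i ((p*p-p) ab.1 ab.2) _ (hppe ab.1 ab.2)
  obtain ⟨jj, hjj⟩ := Finset.exists_le
    (({i} ∪ Finset.univ.image j1) ∪ Finset.univ.image j2)
  have hij : i ≤ jj := hjj i (by simp)
  have hj1jj : ∀ ab : Fin n × Fin n, j1 ab ≤ jj := fun ab =>
    hjj _ (Finset.mem_union_left _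
      (Finset.mem_union_right _ (Finset.mem_image_of_mem _ (Finset.mem_univ ab))))
  have hj2jj : ∀ ab : Fin n × Fin n, j2 ab ≤ jj := fun ab =>
    hjj _ (Finset.mem_union_right _ (Finset.mem_image_of_mem _ (Finset.mem_univ ab)))
  set p' : Matrix (Fin n) (Fin n) (B jj) := p.map (t hij) with hp'def
  have hp'e : ∀ a b : Fin n, ‖p' a b‖ < ‖O‖ + 2 := by
    intro a b
    have heq : p' a b = t (hj1jj (a,b)) (t (hj1 (a,b)) (p a b)) :=
      (tcomp (hj1 (a,b)) (hj1jj (a,b)) (p a b)).symm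
    rw [heq]
    exact lt_of_le_of_lt (ht _ _) (hb1 (a,b))
  have hp'norm : ‖p'‖ ≤ K := by
    have := mat_norm_le_of_entries p' (by positivity : (0:ℝ) ≤ ‖O‖+2)
      (fun a b => (hp'e a b).le)
    linarith
  have hp'pp : ‖p'*p' - p'‖ < δ := by
    have hmm : p'*p' - p' = (p*p - p).map (t hij) := by
      ext a b
      simp [hp'def, Matrix.map_apply, Matrix.sub_apply, Matrix.mul_apply, map_sub, map_sum,
        _root_.map_mul]
    have hent : ∀ a b : Fin n, ‖(p'*p' - p') a b‖ ≤ δe := by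
      intro a b
      rw [hmm]
      have heq : ((p*p-p).map (t hij)) a b
          = t (hj2jj (a,b)) (t (hj2 (a,b)) ((p*p-p) a b)) :=
        (tcomp (hj2 (a,b)) (hj2jj (a,b)) ((p*p-p) a b)).symm
      rw [heq]
      exact le_of_lt (lt_of_le_of_lt (ht _ _) (hb2 (a,b)))
    calc ‖p'*p' - p'‖ ≤ n * δe := mat_norm_le_of_entries _ hδe0.le hent
      _ < δ := hδeδ
  -- Step 7: Newton iteration over B jj
  haveI : CompleteSpace (Matrix (Fin n) (Fin n) (B jj)) := mat_complete
  have hNsm : ‖p'*p' - p'‖ * (2*(2*‖p'‖+3)) < εN := by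
    have hB : 2*(2*‖p'‖+3) ≤ 2*(2*K+3) := by linarith [hp'norm]
    have hBpos : (0:ℝ) < 2*(2*K+3) := by positivity
    calc ‖p'*p'-p'‖*(2*(2*‖p'‖+3)) ≤ ‖p'*p'-p'‖*(2*(2*K+3)) :=
          mul_le_mul_of_nonneg_left hB (norm_nonneg _)
      _ < δ*(2*(2*K+3)) := mul_lt_mul_of_pos_right hp'pp hBpos
      _ ≤ (εN/(2*(2*K+3))/2)*(2*(2*K+3)) := mul_le_mul_of_nonneg_right hδN hBpos.le
      _ = εN/2 := by field_simp
      _ < εN := by linarith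
  obtain ⟨q, hqidem, hqp'⟩ := @newton_idem _ _ mat_complete p' _ hεN0 hεN1
    (le_of_lt (lt_of_lt_of_le hp'pp hδ8)) hNsm
  -- Step 8: conclude
  refine ⟨n, jj, q, hqidem, ?_⟩
  set qC : Matrix (Fin n) (Fin n) C := q.map (u jj) with hqCdef
  have hqCidem : qC * qC = qC := by
    rw [hqCdef, ← Matrix.map_mul, hqidem]
  have hP'map : p'.map (u jj) = P := by
    ext a b
    simp only [hp'def, hPdef, Matrix.map_apply]
    exact hu hij (p a b)
  have hqp : ‖qC - P‖ ≤ ‖q - p'‖ := by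
    have heq : qC - P = (q - p').map (u jj) := by
      rw [← hP'map]
      ext a b
      simp [hqCdef, Matrix.map_apply, map_sub]
    rw [heq]
    exact mat_map_norm_le (u jj) (hult jj) _
  have hclose : ‖qC - O‖ < εf := by
    have tri : ‖qC - O‖ ≤ ‖qC - P‖ + ‖P - O‖ := by
      have := norm_add_le (qC - P) (P - O)
      rwa [sub_add_sub_cancel] at this
    have h3 : ‖P - O‖ < ε₁ := hp
    have : εN + ε₁ ≤ εf := by rw [hεN] at *; linarith
    linarith [hqp']
  have hunit : ‖(O + O - 1) * (qC - O)‖ < 1 := by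
    calc ‖(O+O-1)*(qC-O)‖ ≤ c * ‖qC - O‖ := by rw [hc]; exact norm_mul_le _ _
      _ ≤ c * εf := mul_le_mul_of_nonneg_left hclose.le hc0
      _ < 1 := by
        rw [hεf, ← div_eq_mul_inv]
        exact (div_lt_one (by positivity)).2 (by linarith)
  obtain ⟨U, hU⟩ := @exists_unit_conj _ _ mat_complete O qC hO hqCidem hunit
  obtain ⟨eqv⟩ := range_equiv_of_conj O qC U hU
  exact ⟨hMiso.trans eqv⟩
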